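/- Let H be an N×N complex Hadamard matrix and let Hᵗ denote its transpose (also complex Hadamard). For p, r ≥ 1 let T_p(H) ∈ M_{N^p}(ℂ) and T_r(Hᵗ) ∈ M_{N^r}(ℂ) be the associated matrices, (T_p(H))_{i₁…i_p, j₁…j_p} = tr(P^H_{i₁j₁}⋯P^H_{i_pj_p}) and similarly for Hᵗ. Then the following moment/truncation duality holds: Tr(T_p(H)^r)/N^p = Tr(T_r(Hᵗ)^p)/N^r. -/

import Mathlib

open Matrix BigOperators ComplexConjugate

/-- `H` is a complex Hadamard matrix. -/
def IsHadamard {I : Type*} [Fintype I] [DecidableEq I] (H : Matrix I I ℂ) : Prop :=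
  (∀ i j, ‖H i j‖ = 1) ∧
  (∀ i j, ∑ k, H i k * conj (H j k) = if i = j then (Fintype.card I : ℂ) else 0)

/-- The rank-one projection `P_{ij} = Proj(H_i/H_j)`. -/
noncomputable def hadamardProj {I : Type*} [Fintype I] (H : Matrix I I ℂ) (i j : I) :
    Matrix I I ℂ :=
  fun k l => (Fintype.card I : ℂ)⁻¹ * H i k * H j l * conj (H i l * H j k)

/-- The matrix `T_p(H) ∈ M_{N^p}(ℂ)`, with entries
`(T_p)_{i₁…i_p,j₁…j_p} = tr(P_{i₁j₁}⋯P_{i_pj_p})`, `tr = Tr/N` the normalized trace. -/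
noncomputable def Tmat {I : Type*} [Fintype I] [DecidableEq I] (H : Matrix I I ℂ) (p : ℕ) :
    Matrix (Fin p → I) (Fin p → I) ℂ :=
  fun i j => (Fintype.card I : ℂ)⁻¹ *
    Matrix.trace ((List.ofFn fun s => hadamardProj H (i s) (j s)).prod)


section Aux
variable {I : Type*} [Fintype I] [DecidableEq I]

omit [DecidableEq I] in
lemma sum_fun_one (f : (Fin 1 → I) → ℂ) : ∑ k : Fin 1 → I, f k = ∑ x : I, f (fun _ => x) := by
  apply Fintype.sum_equiv (Equiv.funUnique (Fin 1) I)
  intro k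
  congr 1
  ext s
  have : s = 0 := Subsingleton.elim _ _
  subst this; rfl

omit [DecidableEq I] in
lemma sum_fun_cons {n : ℕ} (f : (Fin (n+1) → I) → ℂ) :
    ∑ k : Fin (n+1) → I, f k = ∑ x : I, ∑ k' : Fin n → I, f (Fin.cons x k') := by
  calc ∑ k : Fin (n+1) → I, f k
      = ∑ q : I × (Fin n → I), f ((Fin.consEquiv fun _ => I) q) :=
        ((Fin.consEquiv fun _ => I).sum_comp f).symm
    _ = ∑ x : I, ∑ k' : Fin n → I, f (Fin.cons x k') := by
        rw [Fintype.sum_prod_type]; rfl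

lemma ofFnProdEntry : ∀ (p : ℕ) (M : Fin p → Matrix I I ℂ) (i j : I),
    (List.ofFn M).prod i j = ∑ k : Fin (p+1) → I,
      (if k 0 = i then (1:ℂ) else 0) * (if k (Fin.last p) = j then 1 else 0) *
      ∏ s : Fin p, M s (k s.castSucc) (k s.succ) := by
  intro p
  induction p with
  | zero =>
    intro M i j
    rw [sum_fun_one]
    simp [List.ofFn_zero, Matrix.one_apply, ite_and, eq_comm]
  | succ p ih =>
    intro M i j
    rw [sum_fun_cons, List.ofFn_succ, List.prod_cons, Matrix.mul_apply]
    have hterm : ∀ (x : I) (k' : Fin (p+1) → I),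
        ((if (Fin.cons x k' : Fin (p+2) → I) 0 = i then (1:ℂ) else 0) *
          (if (Fin.cons x k' : Fin (p+2) → I) (Fin.last (p+1)) = j then 1 else 0) *
          ∏ s : Fin (p+1), M s ((Fin.cons x k' : Fin (p+2) → I) s.castSucc)
            ((Fin.cons x k' : Fin (p+2) → I) s.succ))
        = if x = i then ((if k' (Fin.last p) = j then (1:ℂ) else 0) *
            (M 0 x (k' 0) * ∏ s : Fin p, M s.succ (k' s.castSucc) (k' s.succ))) else 0 := by
      intro x k'
      have hlast : (Fin.last (p+1)) = Fin.succ (Fin.last p) := rfl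
      rw [Fin.prod_univ_succ, hlast]
      simp only [Fin.cons_zero, Fin.cons_succ, Fin.castSucc_zero, ← Fin.succ_castSucc]
      by_cases hx : x = i <;> simp [hx] <;> ring
    simp only [hterm]
    have hpull : ∀ x : I, (∑ k' : Fin (p+1) → I, if x = i then ((if k' (Fin.last p) = j then (1:ℂ) else 0) *
            (M 0 x (k' 0) * ∏ s : Fin p, M s.succ (k' s.castSucc) (k' s.succ))) else 0)
        = if x = i then (∑ k' : Fin (p+1) → I, (if k' (Fin.last p) = j then (1:ℂ) else 0) *
            (M 0 x (k' 0) * ∏ s : Fin p, M s.succ (k' s.castSucc) (k' s.succ))) else 0 := by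
      intro x; split <;> simp
    simp only [hpull]
    rw [Finset.sum_ite_eq' Finset.univ i]
    simp only [Finset.mem_univ, if_true]
    have hih := fun (m : I) => ih (fun s => M s.succ) m j
    simp only [hih, Finset.mul_sum]
    rw [Finset.sum_comm]
    refine Finset.sum_congr rfl fun k' _ => ?_
    have : ∀ m : I, M 0 i m * ((if k' 0 = m then (1:ℂ) else 0) * (if k' (Fin.last p) = j then 1 else 0) *
        ∏ s : Fin p, M s.succ (k' s.castSucc) (k' s.succ))
        = if k' 0 = m then (M 0 i m * ((if k' (Fin.last p) = j then (1:ℂ) else 0) *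
            ∏ s : Fin p, M s.succ (k' s.castSucc) (k' s.succ))) else 0 := by
      intro m; by_cases h : k' 0 = m <;> simp [h] <;> ring
    simp only [this]
    rw [Finset.sum_ite_eq Finset.univ (k' 0)]
    simp only [Finset.mem_univ, if_true]
    ring

lemma snoc_succ_eq {q : ℕ} (k : Fin (q+1) → I) (s : Fin (q+1)) :
    (Fin.snoc k (k 0) : Fin (q+2) → I) s.succ = k (s + 1) := by
  rcases lt_or_ge ((s : ℕ) + 1) (q+1) with h | h
  · have heq : (s.succ : Fin (q+2)) = Fin.castSucc ⟨(s : ℕ) + 1, h⟩ := by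
      ext; simp
    rw [heq, Fin.snoc_castSucc]
    congr 1
    ext
    have h1 : ((1 : Fin (q+1)) : ℕ) = 1 := by
      have h2 : 1 < q + 1 := by omega
      simp [Fin.val_one', Nat.mod_eq_of_lt h2]
    simp [Fin.add_def, h1, Nat.mod_eq_of_lt h]
  · have hs : (s : ℕ) = q := by have := s.isLt; omega
    have hlast : (s.succ : Fin (q+2)) = Fin.last (q+1) := by ext; simp [hs]
    rw [hlast, Fin.snoc_last]
    congr 1
    ext
    rcases Nat.eq_zero_or_pos q with hq | hq
    · subst hq
      simp [Fin.add_def]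
    · have h1 : ((1 : Fin (q+1)) : ℕ) = 1 := by
        have h2 : 1 < q + 1 := by omega
        simp [Fin.val_one', Nat.mod_eq_of_lt h2]
      simp [Fin.add_def, h1, hs]

omit [DecidableEq I] in
lemma sum_fun_snoc {n : ℕ} (f : (Fin (n+1) → I) → ℂ) :
    ∑ k : Fin (n+1) → I, f k = ∑ x : I, ∑ k' : Fin n → I, f (Fin.snoc k' x) := by
  calc ∑ k : Fin (n+1) → I, f k
      = ∑ q : I × (Fin n → I), f ((Fin.snocEquiv fun _ => I) q) :=
        (((Fin.snocEquiv fun _ => I)).sum_comp f).symm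
    _ = _ := by rw [Fintype.sum_prod_type]; rfl

lemma trace_ofFnProd {p : ℕ} [NeZero p] (M : Fin p → Matrix I I ℂ) :
    Matrix.trace (List.ofFn M).prod
      = ∑ k : Fin p → I, ∏ s : Fin p, M s (k s) (k (s + 1)) := by
  obtain ⟨q, rfl⟩ : ∃ q, p = q + 1 := ⟨p - 1, (Nat.succ_pred_eq_of_pos (NeZero.pos p)).symm⟩
  simp only [Matrix.trace, Matrix.diag, ofFnProdEntry]
  rw [Finset.sum_comm]
  have h1 : ∀ k : Fin (q+2) → I,
      (∑ i : I, (if k 0 = i then (1:ℂ) else 0) * (if k (Fin.last (q+1)) = i then 1 else 0) *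
        ∏ s : Fin (q+1), M s (k s.castSucc) (k s.succ))
      = (if k (Fin.last (q+1)) = k 0 then (1:ℂ) else 0) *
        ∏ s : Fin (q+1), M s (k s.castSucc) (k s.succ) := by
    intro k
    have h2 : ∀ i : I, (if k 0 = i then (1:ℂ) else 0) * (if k (Fin.last (q+1)) = i then 1 else 0) *
        ∏ s : Fin (q+1), M s (k s.castSucc) (k s.succ)
        = if k 0 = i then ((if k (Fin.last (q+1)) = i then (1:ℂ) else 0) *
            ∏ s : Fin (q+1), M s (k s.castSucc) (k s.succ)) else 0 := by
      intro i; split <;> simp [mul_assoc]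
    simp only [h2]
    rw [Finset.sum_ite_eq Finset.univ (k 0)]
    simp
  simp only [h1]
  rw [sum_fun_snoc (fun k => (if k (Fin.last (q+1)) = k 0 then (1:ℂ) else 0) *
        ∏ s : Fin (q+1), M s (k s.castSucc) (k s.succ))]
  have h3 : ∀ (x : I) (k' : Fin (q+1) → I),
      ((if (Fin.snoc k' x : Fin (q+2) → I) (Fin.last (q+1)) = (Fin.snoc k' x : Fin (q+2) → I) 0
          then (1:ℂ) else 0) *
        ∏ s : Fin (q+1), M s ((Fin.snoc k' x : Fin (q+2) → I) s.castSucc)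
          ((Fin.snoc k' x : Fin (q+2) → I) s.succ))
      = if x = k' 0 then (∏ s : Fin (q+1), M s ((Fin.snoc k' x : Fin (q+2) → I) s.castSucc)
          ((Fin.snoc k' x : Fin (q+2) → I) s.succ)) else 0 := by
    intro x k'
    have e0 : (Fin.snoc k' x : Fin (q+2) → I) 0 = k' 0 := by
      rw [show (0 : Fin (q+2)) = Fin.castSucc 0 from rfl, Fin.snoc_castSucc]
    rw [Fin.snoc_last, e0]
    split <;> simp
  simp only [h3]
  have h4 : ∀ x : I, (∑ k' : Fin (q+1) → I, if x = k' 0 then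
      (∏ s : Fin (q+1), M s ((Fin.snoc k' x : Fin (q+2) → I) s.castSucc)
          ((Fin.snoc k' x : Fin (q+2) → I) s.succ)) else 0)
      = ∑ k' : Fin (q+1) → I, if x = k' 0 then
      (∏ s : Fin (q+1), M s (k' s) (k' (s+1))) else 0 := by
    intro x
    refine Finset.sum_congr rfl fun k' _ => ?_
    split
    · next hx =>
      subst hx
      refine Finset.prod_congr rfl fun s _ => ?_
      rw [Fin.snoc_castSucc, snoc_succ_eq]
    · rfl
  simp only [h4]
  rw [Finset.sum_comm]
  refine Finset.sum_congr rfl fun k' _ => ?_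
  rw [Finset.sum_ite_eq' Finset.univ (k' 0)]
  simp

/-- The big grid sum. -/
noncomputable def Sgrid (H : Matrix I I ℂ) (p r : ℕ) [NeZero p] [NeZero r] : ℂ :=
  ∑ i : Fin r → Fin p → I, ∑ k : Fin r → Fin p → I,
    ∏ a : Fin r, ∏ s : Fin p,
      (H (i a s) (k a s) * H (i (a+1) s) (k a (s+1)) *
        conj (H (i a s) (k a (s+1)) * H (i (a+1) s) (k a s)))

lemma Tmat_apply (H : Matrix I I ℂ) {p : ℕ} [NeZero p] (x y : Fin p → I) :
    Tmat H p x y = (Fintype.card I : ℂ)⁻¹ ^ (p+1) *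
      ∑ k : Fin p → I, ∏ s : Fin p,
        (H (x s) (k s) * H (y s) (k (s+1)) * conj (H (x s) (k (s+1)) * H (y s) (k s))) := by
  unfold Tmat
  rw [trace_ofFnProd]
  simp only [hadamardProj]
  have h1 : ∀ k : Fin p → I,
      (∏ s : Fin p, ((Fintype.card I : ℂ)⁻¹ * H (x s) (k s) * H (y s) (k (s+1)) *
        conj (H (x s) (k (s+1)) * H (y s) (k s))))
      = (Fintype.card I : ℂ)⁻¹ ^ p * ∏ s : Fin p,
        (H (x s) (k s) * H (y s) (k (s+1)) * conj (H (x s) (k (s+1)) * H (y s) (k s))) := by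
    intro k
    rw [show (∏ s : Fin p, ((Fintype.card I : ℂ)⁻¹ * H (x s) (k s) * H (y s) (k (s+1)) *
        conj (H (x s) (k (s+1)) * H (y s) (k s))))
      = ∏ s : Fin p, ((Fintype.card I : ℂ)⁻¹ *
        (H (x s) (k s) * H (y s) (k (s+1)) * conj (H (x s) (k (s+1)) * H (y s) (k s)))) from
      Finset.prod_congr rfl fun s _ => by ring]
    rw [Finset.prod_mul_distrib, Finset.prod_const, Finset.card_univ, Fintype.card_fin]
  simp only [h1]
  rw [← Finset.mul_sum, ← mul_assoc, ← pow_succ']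

lemma trace_Tmat_pow (H : Matrix I I ℂ) (p r : ℕ) [NeZero p] [NeZero r] :
    Matrix.trace (Tmat H p ^ r)
      = (Fintype.card I : ℂ)⁻¹ ^ (r * (p+1)) * Sgrid H p r := by
  have h0 : Tmat H p ^ r = (List.ofFn fun _ : Fin r => Tmat H p).prod := by
    rw [List.ofFn_const, List.prod_replicate]
  rw [h0, trace_ofFnProd]
  simp only [Tmat_apply]
  have h1 : ∀ i : Fin r → Fin p → I,
      (∏ a : Fin r, ((Fintype.card I : ℂ)⁻¹ ^ (p+1) *
        ∑ k : Fin p → I, ∏ s : Fin p,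
          (H (i a s) (k s) * H (i (a+1) s) (k (s+1)) *
            conj (H (i a s) (k (s+1)) * H (i (a+1) s) (k s)))))
      = (Fintype.card I : ℂ)⁻¹ ^ (r * (p+1)) *
        ∑ kk : Fin r → Fin p → I, ∏ a : Fin r, ∏ s : Fin p,
          (H (i a s) (kk a s) * H (i (a+1) s) (kk a (s+1)) *
            conj (H (i a s) (kk a (s+1)) * H (i (a+1) s) (kk a s))) := by
    intro i
    rw [Finset.prod_mul_distrib, Finset.prod_const, Finset.card_univ, Fintype.card_fin,
      ← pow_mul, Nat.mul_comm (p+1) r, Fintype.prod_sum]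
  simp only [h1]
  rw [← Finset.mul_sum]
  rfl

def trEquiv (I : Type*) (m n : ℕ) :
    (Fin m → Fin n → I) ≃ (Fin n → Fin m → I) where
  toFun k := fun b c => k c b
  invFun k := fun c b => k b c
  left_inv _ := rfl
  right_inv _ := rfl

lemma Sgrid_symm (H : Matrix I I ℂ) (p r : ℕ) [NeZero p] [NeZero r] :
    Sgrid H p r = Sgrid Hᵀ r p := by
  unfold Sgrid
  rw [Finset.sum_comm]
  refine Fintype.sum_equiv (trEquiv I r p) _ _ fun k => ?_
  refine Fintype.sum_equiv (trEquiv I r p) _ _ fun i => ?_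
  rw [Finset.prod_comm]
  refine Finset.prod_congr rfl fun s _ => Finset.prod_congr rfl fun a _ => ?_
  simp only [trEquiv, Equiv.coe_fn_mk, Matrix.transpose_apply, _root_.map_mul]
  ring

end Aux

/-- the moment/truncation duality: for a complex Hadamard matrix `H` of
size `N` and its transpose `Hᵗ`, and all `p, r ≥ 1`,
`Tr(T_p(H)^r)/N^p = Tr(T_r(Hᵗ)^p)/N^r`. -/
theorem moment_truncation_duality (N : ℕ) (hN : 1 ≤ N) (p r : ℕ) (hp : 1 ≤ p) (hr : 1 ≤ r)
    (H : Matrix (Fin N) (Fin N) ℂ) (hH : _root_.IsHadamard H) :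
    Matrix.trace (Tmat H p ^ r) / (N : ℂ) ^ p =
      Matrix.trace (Tmat Hᵀ r ^ p) / (N : ℂ) ^ r := by
  haveI : NeZero p := ⟨by omega⟩
  haveI : NeZero r := ⟨by omega⟩
  have hc : (N : ℂ) ≠ 0 := by
    exact_mod_cast Nat.cast_ne_zero.mpr (by omega)
  rw [trace_Tmat_pow H p r, trace_Tmat_pow Hᵀ r p, ← Sgrid_symm H p r]
  simp only [Fintype.card_fin]
  rw [div_eq_div_iff (pow_ne_zero _ hc) (pow_ne_zero _ hc)]
  have h1 : r * (p+1) = r*p + r := by ring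
  have h2 : p * (r+1) = r*p + p := by ring
  rw [h1, h2, pow_add, pow_add]
  have e1 : ((N:ℂ)⁻¹)^r * (N:ℂ)^r = 1 := by
    rw [inv_pow]; exact inv_mul_cancel₀ (pow_ne_zero _ hc)
  have e2 : ((N:ℂ)⁻¹)^p * (N:ℂ)^p = 1 := by
    rw [inv_pow]; exact inv_mul_cancel₀ (pow_ne_zero _ hc)
  calc ((N:ℂ)⁻¹)^(r*p) * ((N:ℂ)⁻¹)^r * Sgrid H p r * (N:ℂ)^r
      = ((N:ℂ)⁻¹)^(r*p) * Sgrid H p r * (((N:ℂ)⁻¹)^r * (N:ℂ)^r) := by ring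
    _ = ((N:ℂ)⁻¹)^(r*p) * Sgrid H p r * (((N:ℂ)⁻¹)^p * (N:ℂ)^p) := by rw [e1, e2]
    _ = ((N:ℂ)⁻¹)^(r*p) * ((N:ℂ)⁻¹)^p * Sgrid H p r * (N:ℂ)^p := by ring
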